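/- Proposition (gradient-monotonicity lower bound for composite dilated DGFs on chains of scaled extensions). Under the chain-of-scaled-extensions setup, for all x = (x_1,…,x_n) and x′ = (x′_1,…,x′_n) in (relint X_1) ◁^{h_1} ⋯ ◁^{h_{n−1}} (relint X_n), the composite DGF d satisfies ⟨∇d(x) − ∇d(x′), x − x′⟩ ≥ Σ_{k=1}^n Σ_{i=1}^{s_k} ( α_k/2 − Σ_{p=k}^{n−1} α_{p+1}·‖a_p‖₀·a_{p,k}[i] ) · (x_k[i] − x′_k[i])². -/

import Mathlib

open Finset
open scoped RealInnerProductSpace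

section AuxLemmas

open AffineSubspace Set Topology


lemma combo_mem_intrinsicInterior {E : Type*} [NormedAddCommGroup E] [NormedSpace ℝ E]
    {s : Set E} (hs : Convex ℝ s) {y y' : E} (hy : y ∈ intrinsicInterior ℝ s)
    (hy' : y' ∈ intrinsicInterior ℝ s) {t : ℝ} (ht0 : 0 ≤ t) (ht1 : t ≤ 1) :
    y + t • (y' - y) ∈ intrinsicInterior ℝ s := by
  rcases eq_or_lt_of_le ht1 with rfl | ht1
  · simpa using hy'
  have hy's : y' ∈ s := intrinsicInterior_subset hy'
  set A := affineSpan ℝ s with hA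
  have hy'span : y' ∈ A := subset_affineSpan ℝ s hy's
  have ht1' : (1 : ℝ) - t ≠ 0 := by linarith
  have hΦmem : ∀ w : A, ((1 - t) • (w : E) + t • y') ∈ A := by
    intro w
    have h := AffineSubspace.smul_vsub_vadd_mem A t hy'span w.2 w.2
    have h' : t • (y' - (w : E)) + (w : E) ∈ A := by
      simpa [vsub_eq_sub, vadd_eq_add] using h
    have heq : (1 - t) • (w : E) + t • y' = t • (y' - (w : E)) + (w : E) := by module
    rw [heq]; exact h'
  have hΨmem : ∀ w : A, ((1 - t)⁻¹ • ((w : E) - t • y')) ∈ A := by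
    intro w
    have h := AffineSubspace.smul_vsub_vadd_mem A (1 - t)⁻¹ w.2 hy'span hy'span
    have h' : (1 - t)⁻¹ • ((w : E) - y') + y' ∈ A := by
      simpa [vsub_eq_sub, vadd_eq_add] using h
    have heq : (1 - t)⁻¹ • ((w : E) - t • y') = (1 - t)⁻¹ • ((w : E) - y') + y' := by
      rw [smul_sub, smul_sub]
      match_scalars <;> (field_simp; try ring)
    rw [heq]; exact h'
  -- homeomorphism of the subtype
  let Φ : A → A := fun w => ⟨(1 - t) • (w : E) + t • y', hΦmem w⟩
  let Ψ : A → A := fun w => ⟨(1 - t)⁻¹ • ((w : E) - t • y'), hΨmem w⟩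
  have hΦΨ : ∀ w, Ψ (Φ w) = w := by
    intro w
    apply Subtype.ext
    show (1 - t)⁻¹ • (((1 - t) • (w : E) + t • y') - t • y') = (w : E)
    rw [add_sub_cancel_right, smul_smul, inv_mul_cancel₀ ht1', one_smul]
  have hΨΦ : ∀ w, Φ (Ψ w) = w := by
    intro w
    apply Subtype.ext
    show (1 - t) • ((1 - t)⁻¹ • ((w : E) - t • y')) + t • y' = (w : E)
    rw [smul_smul, mul_inv_cancel₀ ht1', one_smul, sub_add_cancel]
  let F : A ≃ₜ A :=
    { toFun := Φ
      invFun := Ψ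
      left_inv := hΦΨ
      right_inv := hΨΦ
      continuous_toFun := by
        apply Continuous.subtype_mk
        exact ((continuous_subtype_val.const_smul _).add continuous_const)
      continuous_invFun := by
        apply Continuous.subtype_mk
        exact ((continuous_subtype_val.sub continuous_const).const_smul _) }
  -- now transport interior membership
  obtain ⟨yt, hytint, hyt⟩ := hy
  have hFT : F '' ((↑) ⁻¹' s : Set A) ⊆ ((↑) ⁻¹' s : Set A) := by
    rintro _ ⟨w, hw, rfl⟩
    show ((1 - t) • (w : E) + t • y') ∈ s
    have := hs hw hy's (by linarith : (0:ℝ) ≤ 1 - t) ht0 (by ring)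
    simpa using this
  have hopen : IsOpen (F '' interior ((↑) ⁻¹' s : Set A)) := by
    rw [F.image_interior]
    exact isOpen_interior
  have hsub : F '' interior ((↑) ⁻¹' s : Set A) ⊆ interior ((↑) ⁻¹' s : Set A) :=
    interior_maximal ((Set.image_mono interior_subset).trans hFT) hopen
  refine ⟨F yt, hsub ⟨yt, hytint, rfl⟩, ?_⟩
  show (1 - t) • (yt : E) + t • y' = y + t • (y' - y)
  rw [hyt]; module

lemma bregman_lower {E : Type*} [NormedAddCommGroup E] [InnerProductSpace ℝ E] [CompleteSpace E]
    {s : Set E} (hs : Convex ℝ s) {d : E → ℝ} {g : E → E}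
    (hdg : ∀ z ∈ intrinsicInterior ℝ s, HasGradientAt d (g z) z)
    (hmono : ∀ z ∈ intrinsicInterior ℝ s, ∀ z' ∈ intrinsicInterior ℝ s,
        ⟪g z - g z', z - z'⟫ ≥ ‖z - z'‖ ^ 2)
    {y y' : E} (hy : y ∈ intrinsicInterior ℝ s) (hy' : y' ∈ intrinsicInterior ℝ s) :
    d y + ⟪g y, y' - y⟫ + ‖y' - y‖ ^ 2 / 2 ≤ d y' := by
  set u := y' - y with hu
  set z : ℝ → E := fun t => y + t • u with hz
  have hzmem : ∀ t ∈ Set.Icc (0:ℝ) 1, z t ∈ intrinsicInterior ℝ s := fun t ht =>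
    combo_mem_intrinsicInterior hs hy hy' ht.1 ht.2
  set φ : ℝ → ℝ := fun t => d (z t) - t * ⟪g y, u⟫ - t ^ 2 / 2 * ‖u‖ ^ 2 with hφ
  have hderiv : ∀ t ∈ Set.Icc (0:ℝ) 1,
      HasDerivAt φ (⟪g (z t), u⟫ - ⟪g y, u⟫ - t * ‖u‖ ^ 2) t := by
    intro t ht
    have hline : HasDerivAt (fun t : ℝ => y + t • u) u t := by
      simpa using ((hasDerivAt_id t).smul_const u).const_add y
    have hgz := (hdg (z t) (hzmem t ht)).hasFDerivAt
    have hcomp := hgz.comp_hasDerivAt t hline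
    have h1 : HasDerivAt (fun t : ℝ => d (z t)) ⟪g (z t), u⟫ t := by
      simp [InnerProductSpace.toDual_apply_apply] at hcomp
      exact hcomp
    have h2 : HasDerivAt (fun t : ℝ => t * ⟪g y, u⟫) ⟪g y, u⟫ t := by
      simpa using (hasDerivAt_id t).mul_const ⟪g y, u⟫
    have h3 : HasDerivAt (fun t : ℝ => t ^ 2 / 2 * ‖u‖ ^ 2) (t * ‖u‖ ^ 2) t := by
      have := ((hasDerivAt_pow 2 t).div_const 2).mul_const (‖u‖ ^ 2)
      simpa [mul_comm, mul_div_assoc] using this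
    exact (h1.sub h2).sub h3
  have hmontonephilocal : MonotoneOn φ (Set.Icc (0:ℝ) 1) := by
    apply monotoneOn_of_deriv_nonneg (convex_Icc 0 1)
    · intro t ht
      exact (hderiv t ht).continuousAt.continuousWithinAt
    · intro t ht
      rw [interior_Icc] at ht
      exact (hderiv t (Set.mem_Icc_of_Ioo ht)).differentiableAt.differentiableWithinAt
    · intro t ht
      rw [interior_Icc] at ht
      rw [(hderiv t (Set.mem_Icc_of_Ioo ht)).deriv]
      have hzt := hzmem t (Set.mem_Icc_of_Ioo ht)
      have hy0 := hzmem 0 (by norm_num)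
      have hm := hmono (z t) hzt y hy
      have hsub : z t - y = t • u := by simp [hz]
      rw [hsub] at hm
      have : ⟪g (z t) - g y, t • u⟫ = t * ⟪g (z t) - g y, u⟫ := real_inner_smul_right _ _ _
      rw [this, norm_smul] at hm
      have htpos : 0 < t := ht.1
      have key : t * ‖u‖ ^ 2 ≤ ⟪g (z t) - g y, u⟫ := by
        have habs : ‖t‖ = t := by rw [Real.norm_eq_abs]; exact abs_of_pos htpos
        rw [habs] at hm
        nlinarith [hm, sq_nonneg ‖u‖]
      have hexp : ⟪g (z t) - g y, u⟫ = ⟪g (z t), u⟫ - ⟪g y, u⟫ := inner_sub_left _ _ _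
      linarith [hexp ▸ key]
  have h01 := hmontonephilocal (by norm_num : (0:ℝ) ∈ Set.Icc (0:ℝ) 1)
    (by norm_num : (1:ℝ) ∈ Set.Icc (0:ℝ) 1) (by norm_num)
  have hz0 : z 0 = y := by simp [hz]
  have hz1 : z 1 = y' := by simp [hz, hu]
  simp only [hφ, hz0, hz1] at h01
  simp only [hu] at *
  nlinarith [h01]

lemma block_ineq {E : Type*} [NormedAddCommGroup E] [InnerProductSpace ℝ E]
    {y y' gy gy' : E} {h h' dy dy' : ℝ}
    (hh0 : 0 < h) (hh1 : h ≤ 1) (hh0' : 0 < h') (hh1' : h' ≤ 1)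
    (hyn : ‖y‖ ≤ 1) (hyn' : ‖y'‖ ≤ 1)
    (hB : dy + ⟪gy, y' - y⟫ + ‖y' - y‖ ^ 2 / 2 ≤ dy')
    (hB' : dy' + ⟪gy', y - y'⟫ + ‖y - y'‖ ^ 2 / 2 ≤ dy) :
    ⟪gy - gy', h • y - h' • y'⟫ + ((dy - ⟪gy, y⟫) - (dy' - ⟪gy', y'⟫)) * (h - h')
      ≥ ‖h • y - h' • y'‖ ^ 2 / 2 - (h - h') ^ 2 := by
  set B : ℝ := dy - dy' - ⟪gy', y - y'⟫ with hBdef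
  set B' : ℝ := dy' - dy - ⟪gy, y' - y⟫ with hB'def
  have hnorm_rev : ‖y' - y‖ = ‖y - y'‖ := norm_sub_rev _ _
  have hBlow : ‖y - y'‖ ^ 2 / 2 ≤ B := by simp only [hBdef]; linarith
  have hB'low : ‖y - y'‖ ^ 2 / 2 ≤ B' := by simp only [hB'def]; rw [← hnorm_rev]; linarith
  -- the identity
  have hid : ⟪gy - gy', h • y - h' • y'⟫ + ((dy - ⟪gy, y⟫) - (dy' - ⟪gy', y'⟫)) * (h - h')
      = h * B + h' * B' := by
    simp only [hBdef, hB'def, inner_sub_left, inner_sub_right, real_inner_smul_right]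
    ring
  rw [hid]
  -- lower bound on h*B + h'*B'
  have hkey : (h + h') / 2 * ‖y - y'‖ ^ 2 ≤ h * B + h' * B' := by
    have t1 := mul_le_mul_of_nonneg_left hBlow hh0.le
    have t2 := mul_le_mul_of_nonneg_left hB'low hh0'.le
    linarith
  -- upper bound on ‖h•y - h'•y'‖²/2
  have hdecomp : h • y - h' • y' = ((h + h') / 2) • (y - y') + ((h - h') / 2) • (y + y') := by
    module
  have hnorm1 : ‖h • y - h' • y'‖ ≤ (h + h') / 2 * ‖y - y'‖ + |h - h'| / 2 * ‖y + y'‖ := by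
    rw [hdecomp]
    refine (norm_add_le _ _).trans ?_
    rw [norm_smul, norm_smul]
    simp only [Real.norm_eq_abs]
    have h1 : |(h + h') / 2| = (h + h') / 2 := abs_of_pos (by linarith)
    have h2 : |(h - h') / 2| = |h - h'| / 2 := by rw [abs_div]; simp
    rw [h1, h2]
  have hyy' : ‖y + y'‖ ≤ 2 := (norm_add_le _ _).trans (by linarith)
  have habs : |h - h'| ^ 2 = (h - h') ^ 2 := sq_abs _
  set m : ℝ := (h + h') / 2 with hm
  set dd : ℝ := |h - h'| / 2 with hdd
  set X : ℝ := ‖h • y - h' • y'‖ with hX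
  set N : ℝ := ‖y - y'‖ with hN
  set M : ℝ := ‖y + y'‖ with hM
  have hm0 : 0 < m := by simp only [hm]; linarith
  have hm1 : m ≤ 1 := by simp only [hm]; linarith
  have hdd0 : 0 ≤ dd := by simp only [hdd]; positivity
  have hMX : 0 ≤ M := norm_nonneg _
  have hNX : 0 ≤ N := norm_nonneg _
  have hX0 : 0 ≤ X := norm_nonneg _
  have hX2 : X ^ 2 ≤ (m * N + dd * M) ^ 2 := by
    apply pow_le_pow_left₀ hX0 hnorm1
  have h2 : (m * N + dd * M) ^ 2 ≤ 2 * (m * N) ^ 2 + 2 * (dd * M) ^ 2 := by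
    linarith [sq_nonneg (m * N - dd * M)]
  have h3 : (m * N) ^ 2 ≤ m * N ^ 2 := by
    nlinarith [mul_nonneg (mul_nonneg hm0.le (sub_nonneg.mpr hm1)) (sq_nonneg N), sq_nonneg N]
  have h4 : (dd * M) ^ 2 ≤ dd ^ 2 * 4 := by
    linarith [mul_nonneg (sq_nonneg dd) (mul_nonneg (sub_nonneg.mpr hyy') (by linarith : (0:ℝ) ≤ 2 + M)), sq_nonneg dd]
  have h5 : dd ^ 2 * 4 = (h - h') ^ 2 := by
    simp only [hdd]
    rw [div_pow, sq_abs]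
    ring
  have hstep : X ^ 2 / 2 - (h - h') ^ 2 ≤ m * N ^ 2 := by linarith
  calc X ^ 2 / 2 - (h - h') ^ 2 ≤ m * N ^ 2 := hstep
    _ ≤ h * B + h' * B' := hkey

lemma sum_lt_swap {n : ℕ} (f : Fin n → Fin n → ℝ) :
    ∑ k : Fin n, ∑ p ∈ Finset.univ.filter (fun p => k < p), f k p
      = ∑ p : Fin n, ∑ k ∈ Finset.univ.filter (fun k => k < p), f k p := by
  simp_rw [Finset.sum_filter]
  exact Finset.sum_comm

lemma euclidean_norm_sq {m : ℕ} (v : EuclideanSpace ℝ (Fin m)) :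
    ‖v‖ ^ 2 = ∑ i, (v i) ^ 2 := by
  rw [← real_inner_self_eq_norm_sq]
  simp only [PiLp.inner_apply, RCLike.inner_apply, conj_trivial, sq]

end AuxLemmas

set_option maxHeartbeats 1000000 in
/-- **Gradient-monotonicity lower bound for composite dilated DGFs on chains of scaled
extensions** (Proposition 2). Under the chain-of-scaled-extensions setup, for all `x, x'` in
`(relint X_1) ◁^{h_1} ⋯ ◁^{h_{n−1}} (relint X_n)`:
`⟨∇d(x) − ∇d(x'), x − x'⟩ ≥ ∑_k ∑_i (α_k/2 − ∑_{p>k} α_p·‖a_p‖₀·a_{p,k}[i])·(x_k[i] − x'_k[i])²`.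
Here component `k ≥ 1` of the chain is scaled by the linear map `H k` with coefficient
blocks `a k q` (`q < k`), and `G` is the gradient of the composite DGF `d`. -/
theorem chain_composite_dgf_gradient_monotonicity_bound
    {n : ℕ} (hn : 0 < n)
    (s : Fin n → ℕ) (hs : ∀ k, 0 < s k)
    (X : (k : Fin n) → Set (EuclideanSpace ℝ (Fin (s k))))
    (hXne : ∀ k, (X k).Nonempty) (hXcpt : ∀ k, IsCompact (X k))
    (hXconv : ∀ k, Convex ℝ (X k)) (hXbd : ∀ k, ∀ v ∈ X k, ‖v‖ ≤ 1)
    (a : (k : Fin n) → (q : Fin n) → EuclideanSpace ℝ (Fin (s q)))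
    (ha : ∀ k q, q < k → ∀ i, a k q i ∈ Set.Icc (0 : ℝ) 1)
    (H : Fin n → ((k : Fin n) → EuclideanSpace ℝ (Fin (s k))) → ℝ)
    (hHdef : ∀ k x, H k x = ∑ q ∈ Finset.univ.filter (fun q => q < k), ⟪a k q, x q⟫)
    (memX memRelX : ((k : Fin n) → EuclideanSpace ℝ (Fin (s k))) → Prop)
    (hmemX : ∀ x, memX x ↔ ∀ k : Fin n,
        (k.val = 0 → x k ∈ X k) ∧ (k.val ≠ 0 → ∃ v ∈ X k, x k = H k x • v))
    (hmemRelX : ∀ x, memRelX x ↔ ∀ k : Fin n,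
        (k.val = 0 → x k ∈ intrinsicInterior ℝ (X k)) ∧
        (k.val ≠ 0 → ∃ v ∈ intrinsicInterior ℝ (X k), x k = H k x • v))
    (hH01 : ∀ x, memX x → ∀ k : Fin n, k.val ≠ 0 → 0 ≤ H k x ∧ H k x ≤ 1)
    (hHpos : ∀ x, memRelX x → ∀ k : Fin n, k.val ≠ 0 → 0 < H k x)
    (d : (k : Fin n) → EuclideanSpace ℝ (Fin (s k)) → ℝ)
    (g : (k : Fin n) → EuclideanSpace ℝ (Fin (s k)) → EuclideanSpace ℝ (Fin (s k)))
    (hdc : ∀ k, ContinuousOn (d k) (X k))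
    (hdg : ∀ k, ∀ y ∈ intrinsicInterior ℝ (X k), HasGradientAt (d k) (g k y) y)
    (hmono : ∀ k, ∀ y ∈ intrinsicInterior ℝ (X k), ∀ y' ∈ intrinsicInterior ℝ (X k),
        ⟪g k y - g k y', y - y'⟫ ≥ ‖y - y'‖ ^ 2)
    (α : Fin n → ℝ) (hα : ∀ k, 0 < α k)
    (y : ((k : Fin n) → EuclideanSpace ℝ (Fin (s k))) → (k : Fin n) → EuclideanSpace ℝ (Fin (s k)))
    (hy : ∀ x k, y x k = if k.val = 0 then x k else (H k x)⁻¹ • x k)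
    (G : ((k : Fin n) → EuclideanSpace ℝ (Fin (s k))) → (k : Fin n) → EuclideanSpace ℝ (Fin (s k)))
    (hG : ∀ x k, G x k = α k • g k (y x k)
        + ∑ p ∈ Finset.univ.filter (fun p => k < p),
            (α p * (d p (y x p) - ⟪g p (y x p), y x p⟫)) • a p k) :
    ∀ x x', memRelX x → memRelX x' →
      ∑ k, ⟪G x k - G x' k, x k - x' k⟫
      ≥ ∑ k, ∑ i, (α k / 2 - ∑ p ∈ Finset.univ.filter (fun p => k < p),
            α p * ((∑ q ∈ Finset.univ.filter (fun q => q < p),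
                (Finset.univ.filter (fun i : Fin (s q) => a p q i ≠ 0)).card : ℕ) : ℝ)
              * a p k i)
          * (x k i - x' k i) ^ 2 := by
  intro x x' hx hx'
  have hxR := (hmemRelX x).mp hx
  have hx'R := (hmemRelX x').mp hx'
  have hxX : memX x := (hmemX x).mpr (fun k =>
    ⟨fun h0 => intrinsicInterior_subset ((hxR k).1 h0),
     fun h0 => by obtain ⟨v, hv, he⟩ := (hxR k).2 h0
                  exact ⟨v, intrinsicInterior_subset hv, he⟩⟩)
  have hx'X : memX x' := (hmemX x').mpr (fun k =>
    ⟨fun h0 => intrinsicInterior_subset ((hx'R k).1 h0),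
     fun h0 => by obtain ⟨v, hv, he⟩ := (hx'R k).2 h0
                  exact ⟨v, intrinsicInterior_subset hv, he⟩⟩)
  -- basic facts about y
  have hyint : ∀ z, memRelX z → ∀ k, y z k ∈ intrinsicInterior ℝ (X k) := by
    intro z hz k
    by_cases h0 : k.val = 0
    · rw [hy z k, if_pos h0]; exact ((hmemRelX z).mp hz k).1 h0
    · obtain ⟨v, hv, he⟩ := ((hmemRelX z).mp hz k).2 h0
      have hpos := hHpos z hz k h0
      rw [hy z k, if_neg h0, he, smul_smul, inv_mul_cancel₀ hpos.ne', one_smul]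
      exact hv
  have hxy : ∀ z, memRelX z → ∀ k, k.val ≠ 0 → z k = H k z • y z k := by
    intro z hz k h0
    have hpos := hHpos z hz k h0
    rw [hy z k, if_neg h0, smul_smul, mul_inv_cancel₀ hpos.ne', one_smul]
  have hy0 : ∀ z (k : Fin n), k.val = 0 → y z k = z k := by
    intro z k h0; rw [hy z k, if_pos h0]
  have hH0 : ∀ z (k : Fin n), k.val = 0 → H k z = 0 := by
    intro z k h0
    rw [hHdef]
    apply Finset.sum_eq_zero
    intro q hq
    exact absurd (Fin.lt_def.mp (Finset.mem_filter.mp hq).2) (by omega)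
  -- the coefficient functions
  set c : ((k : Fin n) → EuclideanSpace ℝ (Fin (s k))) → Fin n → ℝ :=
    fun z p => α p * (d p (y z p) - ⟪g p (y z p), y z p⟫) with hc
  -- Step 1: rewrite the LHS
  have hexpand : ∀ z k (w : EuclideanSpace ℝ (Fin (s k))),
      ⟪G z k, w⟫ = α k * ⟪g k (y z k), w⟫
        + ∑ p ∈ Finset.univ.filter (fun p => k < p), c z p * ⟪a p k, w⟫ := by
    intro z k w
    rw [hG z k, inner_add_left, real_inner_smul_left, sum_inner]
    congr 1
    exact Finset.sum_congr rfl (fun p hp => real_inner_smul_left _ _ _)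
  have hΔH : ∀ p : Fin n, H p x - H p x'
      = ∑ q ∈ Finset.univ.filter (fun q => q < p), ⟪a p q, x q - x' q⟫ := by
    intro p
    rw [hHdef, hHdef, ← Finset.sum_sub_distrib]
    exact Finset.sum_congr rfl (fun q hq => (inner_sub_right _ _ _).symm)
  have hstep1 : ∑ k, ⟪G x k - G x' k, x k - x' k⟫
      = ∑ k, (α k * ⟪g k (y x k) - g k (y x' k), x k - x' k⟫
          + (c x k - c x' k) * (H k x - H k x')) := by
    have e1 : ∀ k : Fin n, ⟪G x k - G x' k, x k - x' k⟫
        = α k * ⟪g k (y x k) - g k (y x' k), x k - x' k⟫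
          + ∑ p ∈ Finset.univ.filter (fun p => k < p),
              (c x p - c x' p) * ⟪a p k, x k - x' k⟫ := by
      intro k
      rw [inner_sub_left, hexpand x k, hexpand x' k, inner_sub_left]
      have hsplit : ∑ p ∈ Finset.univ.filter (fun p => k < p),
          (c x p - c x' p) * ⟪a p k, x k - x' k⟫
          = ∑ p ∈ Finset.univ.filter (fun p => k < p), c x p * ⟪a p k, x k - x' k⟫
            - ∑ p ∈ Finset.univ.filter (fun p => k < p), c x' p * ⟪a p k, x k - x' k⟫ := by
        rw [← Finset.sum_sub_distrib]
        exact Finset.sum_congr rfl (fun p _ => by ring)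
      rw [hsplit]
      ring
    simp_rw [e1]
    rw [Finset.sum_add_distrib, Finset.sum_add_distrib]
    congr 1
    rw [sum_lt_swap (fun k p => (c x p - c x' p) * ⟪a p k, x k - x' k⟫)]
    apply Finset.sum_congr rfl
    intro p _
    rw [hΔH p, Finset.mul_sum]
  -- Step 2: per-block lower bound
  have hblock : ∀ k : Fin n,
      α k * ⟪g k (y x k) - g k (y x' k), x k - x' k⟫ + (c x k - c x' k) * (H k x - H k x')
        ≥ α k * (‖x k - x' k‖ ^ 2 / 2) - α k * (H k x - H k x') ^ 2 := by
    intro k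
    by_cases h0 : k.val = 0
    · rw [hH0 x k h0, hH0 x' k h0, hy0 x k h0, hy0 x' k h0]
      have hm := hmono k (x k) ((hxR k).1 h0) (x' k) ((hx'R k).1 h0)
      have hα' := (hα k).le
      have hnn := sq_nonneg ‖x k - x' k‖
      nlinarith [mul_le_mul_of_nonneg_left hm hα']
    · have hpos := hHpos x hx k h0
      have hpos' := hHpos x' hx' k h0
      have hle := (hH01 x hxX k h0).2
      have hle' := (hH01 x' hx'X k h0).2
      have hyn : ‖y x k‖ ≤ 1 := hXbd k _ (intrinsicInterior_subset (hyint x hx k))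
      have hyn' : ‖y x' k‖ ≤ 1 := hXbd k _ (intrinsicInterior_subset (hyint x' hx' k))
      have hB := bregman_lower (hXconv k) (hdg k) (hmono k) (hyint x hx k) (hyint x' hx' k)
      have hB' := bregman_lower (hXconv k) (hdg k) (hmono k) (hyint x' hx' k) (hyint x hx k)
      have hbi := block_ineq hpos hle hpos' hle' hyn hyn' hB hB'
      have hxk : x k - x' k = H k x • y x k - H k x' • y x' k := by
        rw [← hxy x hx k h0, ← hxy x' hx' k h0]
      rw [hxk]
      have hcc : c x k - c x' k
          = α k * ((d k (y x k) - ⟪g k (y x k), y x k⟫)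
              - (d k (y x' k) - ⟪g k (y x' k), y x' k⟫)) := by
        simp only [hc]; ring
      rw [hcc]
      have := mul_le_mul_of_nonneg_left hbi (hα k).le
      nlinarith [this]
  -- Step 3: Cauchy-Schwarz bound on (H p x - H p x')²
  set N : Fin n → ℝ := fun p => ((∑ q ∈ Finset.univ.filter (fun q => q < p),
      (Finset.univ.filter (fun i : Fin (s q) => a p q i ≠ 0)).card : ℕ) : ℝ) with hN
  set T : Fin n → ℝ := fun p => ∑ q ∈ Finset.univ.filter (fun q => q < p),
      ∑ i, a p q i * (x q i - x' q i) ^ 2 with hT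
  have hcs : ∀ p : Fin n, (H p x - H p x') ^ 2 ≤ N p * T p := by
    intro p
    set Q : Finset (Fin n) := Finset.univ.filter (fun q => q < p) with hQ
    set I : Finset ((q : Fin n) × Fin (s q)) :=
      Q.sigma (fun q => Finset.univ.filter (fun i => a p q i ≠ 0)) with hI
    have haq : ∀ q ∈ Q, ∀ i, 0 ≤ a p q i ∧ a p q i ≤ 1 := by
      intro q hq i
      have := ha p q (Finset.mem_filter.mp hq).2 i
      exact ⟨this.1, this.2⟩
    have hΔHsum : H p x - H p x' = ∑ j ∈ I, a p j.1 j.2 * (x j.1 j.2 - x' j.1 j.2) := by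
      rw [hΔH p, Finset.sum_sigma]
      apply Finset.sum_congr rfl
      intro q hq
      have hin : ⟪a p q, x q - x' q⟫ = ∑ i, a p q i * (x q i - x' q i) := by
        simp [PiLp.inner_apply, RCLike.inner_apply]
        exact Finset.sum_congr rfl (fun i _ => mul_comm _ _)
      rw [hin]
      symm
      apply Finset.sum_filter_of_ne
      intro i _ hne
      intro h0
      apply hne
      rw [h0, zero_mul]
    have hCS : (∑ j ∈ I, a p j.1 j.2 * (x j.1 j.2 - x' j.1 j.2)) ^ 2
        ≤ (I.card : ℝ) * ∑ j ∈ I, (a p j.1 j.2 * (x j.1 j.2 - x' j.1 j.2)) ^ 2 :=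
      sq_sum_le_card_mul_sum_sq
    have hcard : (I.card : ℝ) = N p := by
      rw [hI, Finset.card_sigma, hN]
    have hsum2 : ∑ j ∈ I, (a p j.1 j.2 * (x j.1 j.2 - x' j.1 j.2)) ^ 2 ≤ T p := by
      rw [Finset.sum_sigma, hT]
      apply Finset.sum_le_sum
      intro q hq
      calc ∑ i ∈ Finset.univ.filter (fun i => a p q i ≠ 0),
              (a p q i * (x q i - x' q i)) ^ 2
          ≤ ∑ i ∈ Finset.univ.filter (fun i => a p q i ≠ 0),
              a p q i * (x q i - x' q i) ^ 2 := by
            apply Finset.sum_le_sum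
            intro i _
            have h01 := haq q hq i
            nlinarith [mul_nonneg (mul_nonneg h01.1 (sub_nonneg.mpr h01.2))
              (sq_nonneg (x q i - x' q i))]
        _ ≤ ∑ i, a p q i * (x q i - x' q i) ^ 2 := by
            apply Finset.sum_le_sum_of_subset_of_nonneg (Finset.filter_subset _ _)
            intro i _ _
            exact mul_nonneg (haq q hq i).1 (sq_nonneg _)
    have hTnn : 0 ≤ ∑ j ∈ I, (a p j.1 j.2 * (x j.1 j.2 - x' j.1 j.2)) ^ 2 :=
      Finset.sum_nonneg (fun j _ => sq_nonneg _)
    calc (H p x - H p x') ^ 2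
        = (∑ j ∈ I, a p j.1 j.2 * (x j.1 j.2 - x' j.1 j.2)) ^ 2 := by rw [hΔHsum]
      _ ≤ (I.card : ℝ) * ∑ j ∈ I, (a p j.1 j.2 * (x j.1 j.2 - x' j.1 j.2)) ^ 2 := hCS
      _ ≤ N p * T p := by
          rw [← hcard]
          exact mul_le_mul_of_nonneg_left hsum2 (Nat.cast_nonneg _)
  -- Step 4: rewrite the RHS
  have hRHS : ∑ k, ∑ i, (α k / 2 - ∑ p ∈ Finset.univ.filter (fun p => k < p),
        α p * ((∑ q ∈ Finset.univ.filter (fun q => q < p),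
            (Finset.univ.filter (fun i : Fin (s q) => a p q i ≠ 0)).card : ℕ) : ℝ)
          * a p k i) * (x k i - x' k i) ^ 2
      = ∑ k, α k * (‖x k - x' k‖ ^ 2 / 2) - ∑ p, α p * (N p * T p) := by
    have hNp : ∀ p : Fin n, ((∑ q ∈ Finset.univ.filter (fun q => q < p),
        (Finset.univ.filter (fun i : Fin (s q) => a p q i ≠ 0)).card : ℕ) : ℝ) = N p :=
      fun p => rfl
    simp_rw [hNp]
    have hnormk : ∀ k : Fin n, ∑ i, (x k i - x' k i) ^ 2 = ‖x k - x' k‖ ^ 2 := by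
      intro k
      rw [euclidean_norm_sq]
      exact Finset.sum_congr rfl (fun i _ => by rfl)
    have e1 : ∀ k : Fin n, ∑ i, (α k / 2 - ∑ p ∈ Finset.univ.filter (fun p => k < p),
          α p * N p * a p k i) * (x k i - x' k i) ^ 2
        = α k * (‖x k - x' k‖ ^ 2 / 2)
          - ∑ p ∈ Finset.univ.filter (fun p => k < p),
              α p * N p * ∑ i, a p k i * (x k i - x' k i) ^ 2 := by
      intro k
      calc ∑ i, (α k / 2 - ∑ p ∈ Finset.univ.filter (fun p => k < p),
              α p * N p * a p k i) * (x k i - x' k i) ^ 2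
          = ∑ i, (α k / 2 * (x k i - x' k i) ^ 2
              - ∑ p ∈ Finset.univ.filter (fun p => k < p),
                  α p * N p * (a p k i * (x k i - x' k i) ^ 2)) := by
            apply Finset.sum_congr rfl
            intro i _
            rw [sub_mul, Finset.sum_mul]
            congr 1
            exact Finset.sum_congr rfl (fun p _ => by ring)
        _ = ∑ i, α k / 2 * (x k i - x' k i) ^ 2
            - ∑ i, ∑ p ∈ Finset.univ.filter (fun p => k < p),
                α p * N p * (a p k i * (x k i - x' k i) ^ 2) := Finset.sum_sub_distrib _ _
        _ = α k * (‖x k - x' k‖ ^ 2 / 2)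
            - ∑ p ∈ Finset.univ.filter (fun p => k < p),
                α p * N p * ∑ i, a p k i * (x k i - x' k i) ^ 2 := by
            congr 1
            · rw [← Finset.mul_sum, hnormk k]; ring
            · rw [Finset.sum_comm]
              exact Finset.sum_congr rfl (fun p _ => by rw [Finset.mul_sum])
    rw [Finset.sum_congr rfl (fun k _ => e1 k), Finset.sum_sub_distrib]
    congr 1
    rw [sum_lt_swap (fun k p => α p * N p * ∑ i, a p k i * (x k i - x' k i) ^ 2)]
    apply Finset.sum_congr rfl
    intro p _
    have : ∑ k ∈ Finset.univ.filter (fun k => k < p),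
        α p * N p * ∑ i, a p k i * (x k i - x' k i) ^ 2
        = α p * N p * ∑ k ∈ Finset.univ.filter (fun k => k < p),
            ∑ i, a p k i * (x k i - x' k i) ^ 2 := by
      rw [Finset.mul_sum]
    rw [this, hT, mul_assoc]
  -- combine
  rw [hstep1, hRHS]
  have step2 : ∑ k, (α k * ⟪g k (y x k) - g k (y x' k), x k - x' k⟫
        + (c x k - c x' k) * (H k x - H k x'))
      ≥ ∑ k, (α k * (‖x k - x' k‖ ^ 2 / 2) - α k * (H k x - H k x') ^ 2) :=
    Finset.sum_le_sum (fun k _ => hblock k)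
  have step3 : ∑ k, (α k * (‖x k - x' k‖ ^ 2 / 2) - α k * (H k x - H k x') ^ 2)
      ≥ ∑ k, α k * (‖x k - x' k‖ ^ 2 / 2) - ∑ p, α p * (N p * T p) := by
    have hsplit : ∑ k, (α k * (‖x k - x' k‖ ^ 2 / 2) - α k * (H k x - H k x') ^ 2)
        = ∑ k, α k * (‖x k - x' k‖ ^ 2 / 2) - ∑ k, α k * (H k x - H k x') ^ 2 :=
      Finset.sum_sub_distrib _ _
    rw [hsplit]
    have : ∑ p, α p * (H p x - H p x') ^ 2 ≤ ∑ p, α p * (N p * T p) :=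
      Finset.sum_le_sum (fun p _ => mul_le_mul_of_nonneg_left (hcs p) (hα p).le)
    linarith
  linarith
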